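/- arXiv:1709.04148 — 2 statements merged into one kernel-verified Lean document; each statement's English description precedes it below -/
import Mathlib

section
/- Let I and J be finite index sets. For each i ∈ I let w_i ∈ ℝ, and for each i ∈ I, j ∈ J let P_{ji} ∈ [0,1] and ξ_{ji} ∈ ℝ. For each i define χ_i = Σ_{∅≠T⊆J} (Π_{j∈T} P_{ji})(Π_{j∈J∖T}(1−P_{ji})) · (Σ_{j∈T} ξ_{ji})/|T| and η_{ij} = P_{ji} · Σ_{T⊆J∖{j}} (1/(|T|+1)) (Π_{k∈T} P_{ki})(Π_{k∈J∖(T∪{j})}(1−P_{ki})). Then Σ_{i∈I} w_i χ_i = Σ_{j∈J} Σ_{i∈I} w_i η_{ij} ξ_{ji}; that is, the total payment of all mobile devices equals the total revenue of all MEC servers. -/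
open Finset

lemma swap_powerset_sum {κ : Type*} [DecidableEq κ] (J : Finset κ) (f : Finset κ → κ → ℝ) :
    ∑ T ∈ J.powerset, ∑ j ∈ T, f T j
      = ∑ j ∈ J, ∑ T ∈ (J.erase j).powerset, f (insert j T) j := by
  rw [Finset.sum_sigma', Finset.sum_sigma']
  apply Finset.sum_nbij' (i := fun x => (⟨x.2, x.1.erase x.2⟩ : Σ _ : κ, Finset κ))
    (j := fun x => (⟨insert x.1 x.2, x.1⟩ : Σ _ : Finset κ, κ))
  · rintro ⟨T, j⟩ h
    simp only [Finset.mem_sigma, Finset.mem_powerset] at h ⊢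
    exact ⟨h.1 h.2, fun k hk => Finset.mem_erase.2
      ⟨(Finset.mem_erase.1 hk).1, h.1 ((Finset.mem_erase.1 hk).2)⟩⟩
  · rintro ⟨j, T⟩ h
    simp only [Finset.mem_sigma, Finset.mem_powerset, Finset.mem_erase] at h ⊢
    constructor
    · exact Finset.insert_subset h.1 (h.2.trans (Finset.erase_subset _ _))
    · exact Finset.mem_insert_self _ _
  · rintro ⟨T, j⟩ h
    simp only [Finset.mem_sigma, Finset.mem_powerset] at h
    simp [Finset.insert_erase h.2]
  · rintro ⟨j, T⟩ h
    simp only [Finset.mem_sigma, Finset.mem_powerset, Finset.mem_erase] at h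
    have hj : j ∉ T := fun hjT => (Finset.mem_erase.1 (h.2 hjT)).1 rfl
    simp [Finset.erase_insert hj]
  · rintro ⟨T, j⟩ h
    simp only [Finset.mem_sigma, Finset.mem_powerset] at h
    simp [Finset.insert_erase h.2]

/-- Budget balance (equation (7) of the paper): the total payment of all
mobile devices `i ∈ I` (scheduled with probability `w i`, covered by server `j` with
probability `P j i`, paying price `ξ j i` to a uniformly selected covering server) equals
the total revenue of all MEC servers `j ∈ J`. -/
theorem total_payment_eq_total_revenue
    {ι κ : Type*} [DecidableEq κ] (I : Finset ι) (J : Finset κ)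
    (w : ι → ℝ) (P ξ : κ → ι → ℝ)
    (hP : ∀ i ∈ I, ∀ j ∈ J, P j i ∈ Set.Icc (0 : ℝ) 1)
    (χ : ι → ℝ)
    (hχ : ∀ i ∈ I, χ i = ∑ T ∈ J.powerset.erase ∅,
      (∏ j ∈ T, P j i) * (∏ j ∈ J \ T, (1 - P j i)) * ((∑ j ∈ T, ξ j i) / T.card))
    (η : ι → κ → ℝ)
    (hη : ∀ i ∈ I, ∀ j ∈ J, η i j = P j i * ∑ T ∈ (J.erase j).powerset,
      (1 / ((T.card : ℝ) + 1)) * (∏ k ∈ T, P k i) * (∏ k ∈ J \ insert j T, (1 - P k i))) :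
    ∑ i ∈ I, w i * χ i = ∑ j ∈ J, ∑ i ∈ I, w i * η i j * ξ j i := by
  have key : ∀ i ∈ I, χ i = ∑ j ∈ J, η i j * ξ j i := by
    intro i hi
    rw [hχ i hi]
    have h1 : ∀ T ∈ J.powerset.erase ∅,
        (∏ j ∈ T, P j i) * (∏ j ∈ J \ T, (1 - P j i)) * ((∑ j ∈ T, ξ j i) / T.card)
        = ∑ j ∈ T, (∏ k ∈ T, P k i) * (∏ k ∈ J \ T, (1 - P k i)) * ξ j i / T.card := by
      intro T hT
      rw [Finset.sum_div, Finset.mul_sum]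
      exact Finset.sum_congr rfl fun j hj => by ring
    rw [Finset.sum_congr rfl h1]
    have h0 : ∑ T ∈ J.powerset.erase ∅,
        ∑ j ∈ T, (∏ k ∈ T, P k i) * (∏ k ∈ J \ T, (1 - P k i)) * ξ j i / T.card
        = ∑ T ∈ J.powerset,
        ∑ j ∈ T, (∏ k ∈ T, P k i) * (∏ k ∈ J \ T, (1 - P k i)) * ξ j i / T.card := by
      rcases Finset.decidableMem ∅ (J.powerset.erase ∅) with _ | _
      · rw [Finset.sum_erase]
        simp
      rw [Finset.sum_erase]
      simp
    rw [h0, swap_powerset_sum]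
    apply Finset.sum_congr rfl
    intro j hj
    rw [hη i hi j hj, Finset.mul_sum, Finset.sum_mul]
    apply Finset.sum_congr rfl
    intro T hT
    rw [Finset.mem_powerset] at hT
    have hjT : j ∉ T := fun h => (Finset.mem_erase.1 (hT h)).1 rfl
    rw [Finset.prod_insert hjT, Finset.card_insert_of_notMem hjT]
    push_cast
    ring
  calc ∑ i ∈ I, w i * χ i = ∑ i ∈ I, ∑ j ∈ J, w i * (η i j * ξ j i) := by
        refine Finset.sum_congr rfl fun i hi => ?_
        rw [key i hi, Finset.mul_sum]
    _ = ∑ j ∈ J, ∑ i ∈ I, w i * η i j * ξ j i := by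
        rw [Finset.sum_comm]
        exact Finset.sum_congr rfl fun j _ => Finset.sum_congr rfl fun i _ => by ring
end

section
/- Let I and J be finite index sets. For each i ∈ I let w_i, α_i, T_i ∈ ℝ, for each j ∈ J let μ_j, C_j ∈ ℝ, and for each i ∈ I, j ∈ J let P_{ji} ∈ [0,1] and ξ_{ji} ∈ ℝ. Define χ_i and η_{ij} as the uniform-selection average and selection weights built from (P_{ji}, ξ_{ji})_{j∈J}, set P_i = w_i χ_i, R_j = Σ_{i∈I} w_i η_{ij} ξ_{ji}, and define the payoffs u_i = α_i T_i − P_i and ũ_j = R_j − μ_j C_j. Then the sum payoff f = Σ_{i∈I} u_i + Σ_{j∈J} ũ_j equals Σ_{i∈I} α_i T_i − Σ_{j∈J} μ_j C_j; i.e., the pricing terms cancel and have no effect on the sum payoff. -/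
open Finset

theorem chi_eq_sum_eta {κ : Type*} [DecidableEq κ] (J : Finset κ) (p x : κ → ℝ) :
    ∑ S ∈ J.powerset.erase ∅,
      (∏ j ∈ S, p j) * (∏ j ∈ J \ S, (1 - p j)) * ((∑ j ∈ S, x j) / S.card)
    = ∑ j ∈ J, (p j * ∑ S ∈ (J.erase j).powerset,
        (1 / ((S.card : ℝ) + 1)) * (∏ k ∈ S, p k) * (∏ k ∈ J \ insert j S, (1 - p k))) * x j := by
  have h1 : ∑ S ∈ J.powerset.erase ∅,
      (∏ j ∈ S, p j) * (∏ j ∈ J \ S, (1 - p j)) * ((∑ j ∈ S, x j) / S.card)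
      = ∑ S ∈ J.powerset.erase ∅, ∑ j ∈ S,
        (∏ k ∈ S, p k) * (∏ k ∈ J \ S, (1 - p k)) * x j / S.card := by
    refine Finset.sum_congr rfl fun S _ => ?_
    rw [Finset.sum_div, Finset.mul_sum]
    simp [mul_div_assoc]
  rw [h1]
  rw [Finset.sum_comm' (s' := fun j => J.powerset.filter (fun S => j ∈ S)) (t' := J)
    (fun S j => ?_)]
  · refine Finset.sum_congr rfl fun j hj => ?_
    rw [Finset.mul_sum, Finset.sum_mul]
    refine Finset.sum_nbij' (fun S : Finset κ => S.erase j) (fun T => insert j T) ?_ ?_ ?_ ?_ ?_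
    · intro S hS
      simp only [Finset.mem_filter, Finset.mem_powerset] at hS
      simpa only [Finset.mem_powerset] using Finset.erase_subset_erase j hS.1
    · intro T hT
      simp only [Finset.mem_powerset] at hT
      have hjT : j ∉ T := fun h => (Finset.mem_erase.mp (hT h)).1 rfl
      simp only [Finset.mem_filter, Finset.mem_powerset, Finset.mem_insert, true_or,
        and_true]
      exact Finset.insert_subset hj (hT.trans (Finset.erase_subset j J))
    · intro S hS
      simp only [Finset.mem_filter] at hS
      exact Finset.insert_erase hS.2
    · intro T hT
      simp only [Finset.mem_powerset] at hT
      have hjT : j ∉ T := fun h => (Finset.mem_erase.mp (hT h)).1 rfl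
      exact Finset.erase_insert hjT
    · intro S hS
      simp only [Finset.mem_filter, Finset.mem_powerset] at hS
      rw [Finset.insert_erase hS.2, ← Finset.mul_prod_erase S p hS.2,
        ← Finset.card_erase_add_one hS.2]
      push_cast
      ring
  · constructor
    · rintro ⟨hS, hjS⟩
      rw [Finset.mem_erase, Finset.mem_powerset] at hS
      exact ⟨Finset.mem_filter.mpr ⟨Finset.mem_powerset.mpr hS.2, hjS⟩, hS.2 hjS⟩
    · rintro ⟨hS, hjJ⟩
      rw [Finset.mem_filter, Finset.mem_powerset] at hS
      refine ⟨Finset.mem_erase.mpr ⟨?_, Finset.mem_powerset.mpr hS.1⟩, hS.2⟩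
      exact Finset.ne_empty_of_mem hS.2

/-- Lemma 1 of the paper (case `β i = 1`, `γ j = 1`): the pricing terms
cancel in the sum payoff of a coalition, so
`∑ i, u i + ∑ j, utilde j = ∑ i, α i * T i - ∑ j, μ j * C j`. -/
theorem sum_payoff_pricing_cancels
    {ι κ : Type*} [DecidableEq κ] (I : Finset ι) (J : Finset κ)
    (w α T : ι → ℝ) (μ C : κ → ℝ) (P ξ : κ → ι → ℝ)
    (hP : ∀ i ∈ I, ∀ j ∈ J, P j i ∈ Set.Icc (0 : ℝ) 1)
    (χ : ι → ℝ)
    (hχ : ∀ i ∈ I, χ i = ∑ S ∈ J.powerset.erase ∅,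
      (∏ j ∈ S, P j i) * (∏ j ∈ J \ S, (1 - P j i)) * ((∑ j ∈ S, ξ j i) / S.card))
    (η : ι → κ → ℝ)
    (hη : ∀ i ∈ I, ∀ j ∈ J, η i j = P j i * ∑ S ∈ (J.erase j).powerset,
      (1 / ((S.card : ℝ) + 1)) * (∏ k ∈ S, P k i) * (∏ k ∈ J \ insert j S, (1 - P k i)))
    (Pay : ι → ℝ) (hPay : ∀ i ∈ I, Pay i = w i * χ i)
    (R : κ → ℝ) (hR : ∀ j ∈ J, R j = ∑ i ∈ I, w i * η i j * ξ j i)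
    (u : ι → ℝ) (hu : ∀ i ∈ I, u i = α i * T i - Pay i)
    (utilde : κ → ℝ) (hutilde : ∀ j ∈ J, utilde j = R j - μ j * C j)
    (f : ℝ) (hf : f = ∑ i ∈ I, u i + ∑ j ∈ J, utilde j) :
    f = ∑ i ∈ I, α i * T i - ∑ j ∈ J, μ j * C j := by
  have key : ∑ i ∈ I, Pay i = ∑ j ∈ J, R j := by
    rw [Finset.sum_congr rfl hR, Finset.sum_comm]
    refine Finset.sum_congr rfl fun i hi => ?_
    rw [hPay i hi, hχ i hi, chi_eq_sum_eta, Finset.mul_sum]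
    refine Finset.sum_congr rfl fun j hj => ?_
    rw [hη i hi j hj]
    ring
  rw [hf, Finset.sum_congr rfl hu, Finset.sum_congr rfl hutilde,
    Finset.sum_sub_distrib, Finset.sum_sub_distrib, key]
  ring
end
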